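/- The Peleg lifting of a multirelation is the union of the Peleg liftings of its total-on-domain partial-function refinements: S_* = ⋃{f_* | f ⊑_c S}, where f ⊑_c S means f ⊆ S, f is a partial function, and dom f = dom S. -/
import Mathlib


open Set

/-- Ordinary relational composition. -/
def relComp {A B C : Type*} (R : Set (A × B)) (S : Set (B × C)) : Set (A × C) :=
  {p | ∃ b, (p.1, b) ∈ R ∧ (b, p.2) ∈ S}

/-- Kleisli composition of multirelations. -/
def kleisliComp {X Y Z : Type*} (R : Set (X × Set Y)) (S : Set (Y × Set Z)) :
    Set (X × Set Z) :=
  {p | ∃ B, (p.1, B) ∈ R ∧ p.2 = ⋃₀ {C | ∃ b ∈ B, (b, C) ∈ S}}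

/-- Kleisli lifting of a multirelation. -/
def kleisliLift {Y Z : Type*} (S : Set (Y × Set Z)) : Set (Set Y × Set Z) :=
  {p | p.2 = ⋃₀ {C | ∃ b ∈ p.1, (b, C) ∈ S}}

/-- Parikh lifting of a multirelation. -/
def parikhLift {Y Z : Type*} (S : Set (Y × Set Z)) : Set (Set Y × Set Z) :=
  {p | ∀ b ∈ p.1, (b, p.2) ∈ S}

/-- Parikh composition of multirelations. -/
def parikhComp {X Y Z : Type*} (R : Set (X × Set Y)) (S : Set (Y × Set Z)) :
    Set (X × Set Z) :=
  {p | ∃ B, (p.1, B) ∈ R ∧ ∀ b ∈ B, (b, p.2) ∈ S}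

/-- Peleg composition of multirelations. -/
def pelegComp {X Y Z : Type*} (R : Set (X × Set Y)) (S : Set (Y × Set Z)) :
    Set (X × Set Z) :=
  {p | ∃ B, (p.1, B) ∈ R ∧
    ∃ f : Y → Set Z, (∀ b ∈ B, (b, f b) ∈ S) ∧ p.2 = ⋃ b ∈ B, f b}

/-- Peleg lifting of a multirelation. -/
def pelegLift {Y Z : Type*} (S : Set (Y × Set Z)) : Set (Set Y × Set Z) :=
  {p | ∃ f : Y → Set Z, (∀ b ∈ p.1, (b, f b) ∈ S) ∧ p.2 = ⋃ b ∈ p.1, f b}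

/-- The singleton map 1_Y = {(y,{y})}. -/
def singletonMap (Y : Type*) : Set (Y × Set Y) := {p | p.2 = {p.1}}

/-- Converse of the membership relation: {(y,A) | y ∈ A}. -/
def memConv (Y : Type*) : Set (Y × Set Y) := {p | p.1 ∈ p.2}

/-- The inclusion relation Ξ on the powerset. -/
def inclRel (Z : Type*) : Set (Set Z × Set Z) := {p | p.1 ⊆ p.2}

/-- Up-closed multirelations. -/
def upClosed {X Y : Type*} (R : Set (X × Set Y)) : Prop :=
  ∀ a B C, (a, B) ∈ R → B ⊆ C → (a, C) ∈ R

/-- Univalent relations (partial functions). -/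
def isUnivalent {A B : Type*} (f : Set (A × B)) : Prop :=
  ∀ x y y', (x, y) ∈ f → (x, y') ∈ f → y = y'

/-- Domain of a relation. -/
def relDom {A B : Type*} (f : Set (A × B)) : Set A := {x | ∃ y, (x, y) ∈ f}

/-- Union-closed multirelations. -/
def unionClosed {Z W : Type*} (T : Set (Z × Set W)) : Prop :=
  ∀ z (𝔅 : Set (Set W)), 𝔅.Nonempty → (∀ B ∈ 𝔅, (z, B) ∈ T) → (z, ⋃₀ 𝔅) ∈ T

theorem pelegLift_eq_sUnion_pfn {Y Z : Type*} (S : Set (Y × Set Z)) :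
    pelegLift S =
      ⋃₀ ((fun f => pelegLift f) ''
        {f : Set (Y × Set Z) | f ⊆ S ∧ isUnivalent f ∧ relDom f = relDom S}) := by
  ext ⟨B, A⟩
  constructor
  · rintro ⟨g, hg, hA⟩
    simp only at hg hA
    subst hA
    classical
    set h : Y → Set Z := fun y =>
      if y ∈ B then g y
      else if hy : y ∈ relDom S then hy.choose else ∅ with hh
    have hhy : ∀ y ∈ relDom S, (y, h y) ∈ S := by
      intro y hy
      by_cases hb : y ∈ B
      · simp only [hh, hb, if_pos]; exact hg y hb
      · simp only [hh, hb, if_neg, dif_pos hy, not_false_iff]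
        exact hy.choose_spec
    refine ⟨pelegLift {p : Y × Set Z | p.1 ∈ relDom S ∧ p.2 = h p.1},
      ⟨{p : Y × Set Z | p.1 ∈ relDom S ∧ p.2 = h p.1}, ⟨?_, ?_, ?_⟩, rfl⟩, ?_⟩
    · rintro ⟨y, C⟩ ⟨hy, hC⟩
      simp only at hy hC; subst hC; exact hhy y hy
    · rintro x y y' ⟨_, h1⟩ ⟨_, h2⟩
      simp only at h1 h2; rw [h1, h2]
    · ext y
      constructor
      · rintro ⟨C, hC, _⟩; exact hC
      · intro hy; exact ⟨h y, hy, rfl⟩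
    · refine ⟨h, fun b hb => ⟨⟨g b, hg b hb⟩, rfl⟩, ?_⟩
      have heq : ∀ b ∈ B, h b = g b := fun b hb => by simp [hh, hb]
      exact iUnion₂_congr fun b hb => (heq b hb).symm
  · rintro ⟨_, ⟨f, ⟨hfS, _, _⟩, rfl⟩, g, hg, hA⟩
    exact ⟨g, fun b hb => hfS (hg b hb), hA⟩
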